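/- Let Π be a reversible Markov kernel on a measurable space (X,𝓔) with finite reversing measure m. Let κ := inf{ |∂_Π A|_m / m(A) : A ∈ 𝓔, 0 < m(A) ≤ m(X)/2 } be the Cheeger constant, and let 1 − λ₂ := inf{ 𝓔₂(f) / ‖f‖²_{m,2} : f ∈ L²(X,m), ∫_X f dm = 0, f ≠ 0 } (this quantity equals 1 minus the supremum of the spectrum of the Markov operator restricted to the zero-average subspace). Then κ²/2 ≤ 1 − λ₂ ≤ 2κ. -/

import Mathlib

open MeasureTheory ProbabilityTheory ENNReal Set

noncomputable section

/-- The `m`-size of the boundary of `A` with respect to the Markov kernel `Π`: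
`|∂_Π A|_m = ∫_A Π(x, X∖A) dm(x)`. -/
def boundarySize {X : Type*} [MeasurableSpace X] (K : Kernel X X) (m : Measure X)
    (A : Set X) : ℝ :=
  (∫⁻ x in A, K x Aᶜ ∂m).toReal

/-- The Cheeger constant of the Markov kernel `Π` with respect to `m`:
`κ = inf { |∂_Π A|_m / m(A) : A measurable, 0 < m(A) ≤ m(X)/2 }`. -/
def cheegerConst {X : Type*} [MeasurableSpace X] (K : Kernel X X) (m : Measure X) : ℝ :=
  sInf { q : ℝ | ∃ A : Set X, MeasurableSet A ∧ 0 < m A ∧ m A ≤ m Set.univ / 2 ∧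
    q = boundarySize K m A / (m A).toReal }

/-- The `2`-Dirichlet energy `𝓔₂(f) = (1/2) ∫_{X×X} |f(x) − f(y)|² dμ(x,y)` where
`μ = m ⊗ₘ Π` is the measure on `X × X` determined by `μ(A×B) = ∫_A Π(x,B) dm(x)`. -/
def dirichletEnergy2 {X : Type*} [MeasurableSpace X] (K : Kernel X X) (m : Measure X)
    (f : X → ℝ) : ℝ :=
  (1 / 2) * ∫ p, (f p.1 - f p.2) ^ 2 ∂(m.compProd K)

/-- `1 − λ₂`, the infimum of the Rayleigh quotients `𝓔₂(f)/‖f‖²_{m,2}` over nonzero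
zero-average functions `f ∈ L²(X,m)`. -/
def spectralGap {X : Type*} [MeasurableSpace X] (K : Kernel X X) (m : Measure X) : ℝ :=
  sInf { q : ℝ | ∃ f : X → ℝ, MemLp f 2 m ∧ (∫ x, f x ∂m) = 0 ∧ (0 < ∫ x, f x ^ 2 ∂m) ∧
    q = dirichletEnergy2 K m f / ∫ x, f x ^ 2 ∂m }


section CheegerProof

variable {X : Type*} [MeasurableSpace X] (K : Kernel X X) [IsMarkovKernel K]
  (m : Measure X) [IsFiniteMeasure m]

/-- The defining set of the Cheeger constant. -/
def cheegerSet : Set ℝ :=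
  { q : ℝ | ∃ A : Set X, MeasurableSet A ∧ 0 < m A ∧ m A ≤ m Set.univ / 2 ∧
    q = boundarySize K m A / (m A).toReal }

/-- The defining set of the spectral gap. -/
def gapSet : Set ℝ :=
  { q : ℝ | ∃ f : X → ℝ, MemLp f 2 m ∧ (∫ x, f x ∂m) = 0 ∧ (0 < ∫ x, f x ^ 2 ∂m) ∧
    q = dirichletEnergy2 K m f / ∫ x, f x ^ 2 ∂m }

lemma cheegerConst_eq : cheegerConst K m = sInf (cheegerSet K m) := rfl
lemma spectralGap_eq : spectralGap K m = sInf (gapSet K m) := rfl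

lemma boundarySize_nonneg (A : Set X) : 0 ≤ boundarySize K m A := ENNReal.toReal_nonneg

lemma dirichletEnergy2_nonneg (f : X → ℝ) : 0 ≤ dirichletEnergy2 K m f := by
  have : 0 ≤ ∫ p, (f p.1 - f p.2) ^ 2 ∂(m.compProd K) :=
    integral_nonneg fun p => sq_nonneg _
  unfold dirichletEnergy2; positivity

lemma cheegerSet_nonneg : ∀ q ∈ cheegerSet K m, 0 ≤ q := by
  rintro q ⟨A, hA, hpos, hhalf, rfl⟩
  exact div_nonneg (boundarySize_nonneg K m A) ENNReal.toReal_nonneg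

lemma gapSet_nonneg : ∀ q ∈ gapSet K m, 0 ≤ q := by
  rintro q ⟨f, hf, h0, hpos, rfl⟩
  exact div_nonneg (dirichletEnergy2_nonneg K m f) hpos.le

lemma cheegerConst_nonneg : 0 ≤ cheegerConst K m :=
  Real.sInf_nonneg (cheegerSet_nonneg K m)

lemma spectralGap_nonneg : 0 ≤ spectralGap K m :=
  Real.sInf_nonneg (gapSet_nonneg K m)

lemma cheegerSet_bddBelow : BddBelow (cheegerSet K m) :=
  ⟨0, fun q hq => cheegerSet_nonneg K m q hq⟩

lemma gapSet_bddBelow : BddBelow (gapSet K m) :=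
  ⟨0, fun q hq => gapSet_nonneg K m q hq⟩

lemma lint_ne_top (C D : Set X) : (∫⁻ x in C, K x D ∂m) ≠ ⊤ := by
  have h1 : (∫⁻ x in C, K x D ∂m) ≤ ∫⁻ _ in C, 1 ∂m :=
    lintegral_mono fun x => prob_le_one
  refine ne_of_lt (lt_of_le_of_lt h1 ?_)
  simp only [lintegral_one, Measure.restrict_apply_univ]
  exact measure_lt_top m C

lemma rev_sets
    (hrev : ∀ f g : X → ℝ, Measurable f → Measurable g →
      (∃ C, ∀ x, |f x| ≤ C) → (∃ C, ∀ x, |g x| ≤ C) →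
      ∫ x, f x * (∫ y, g y ∂(K x)) ∂m = ∫ x, (∫ y, f y ∂(K x)) * g x ∂m)
    {A B : Set X} (hA : MeasurableSet A) (hB : MeasurableSet B) :
    ∫⁻ x in A, K x B ∂m = ∫⁻ x in B, K x A ∂m := by
  have h := hrev (A.indicator 1) (B.indicator 1)
    (measurable_one.indicator hA) (measurable_one.indicator hB)
    ⟨1, fun x => by by_cases h : x ∈ A <;> simp [h]⟩
    ⟨1, fun x => by by_cases h : x ∈ B <;> simp [h]⟩
  have e1 : ∀ x, (∫ y, B.indicator 1 y ∂(K x)) = (K x B).toReal := fun x =>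
    integral_indicator_one hB
  have e2 : ∀ x, (∫ y, A.indicator 1 y ∂(K x)) = (K x A).toReal := fun x =>
    integral_indicator_one hA
  simp_rw [e1, e2] at h
  have l1 : ∫ x, A.indicator 1 x * (K x B).toReal ∂m
      = ∫ x in A, (K x B).toReal ∂m := by
    rw [← integral_indicator hA]
    congr 1 with x
    by_cases hx : x ∈ A <;> simp [hx]
  have l2 : ∫ x, (K x A).toReal * B.indicator 1 x ∂m
      = ∫ x in B, (K x A).toReal ∂m := by
    rw [← integral_indicator hB]
    congr 1 with x
    by_cases hx : x ∈ B <;> simp [hx]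
  rw [l1, l2] at h
  have i1 : ∫ x in A, (K x B).toReal ∂m = (∫⁻ x in A, K x B ∂m).toReal :=
    integral_toReal ((K.measurable_coe hB).aemeasurable) (.of_forall fun x => measure_lt_top _ _)
  have i2 : ∫ x in B, (K x A).toReal ∂m = (∫⁻ x in B, K x A ∂m).toReal :=
    integral_toReal ((K.measurable_coe hA).aemeasurable) (.of_forall fun x => measure_lt_top _ _)
  rw [i1, i2] at h
  have fin : ∀ (C D : Set X), MeasurableSet D → (∫⁻ x in C, K x D ∂m) ≠ ⊤ := by
    intro C D _
    have h1 : (∫⁻ x in C, K x D ∂m) ≤ ∫⁻ _ in C, 1 ∂m :=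
      lintegral_mono fun x => prob_le_one
    refine ne_of_lt (lt_of_le_of_lt h1 ?_)
    simp only [lintegral_one, Measure.restrict_apply_univ]
    exact measure_lt_top m C
  exact (ENNReal.toReal_eq_toReal_iff' (fin A B hB) (fin B A hA)).mp h

lemma compProd_symm
    (hrev : ∀ f g : X → ℝ, Measurable f → Measurable g →
      (∃ C, ∀ x, |f x| ≤ C) → (∃ C, ∀ x, |g x| ≤ C) →
      ∫ x, f x * (∫ y, g y ∂(K x)) ∂m = ∫ x, (∫ y, f y ∂(K x)) * g x ∂m) :
    (m.compProd K).map Prod.swap = m.compProd K := by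
  refine ext_of_generate_finite _ generateFrom_prod.symm isPiSystem_prod ?_ ?_
  · rintro s ⟨A, hA, B, hB, rfl⟩
    simp only [mem_setOf_eq] at hA hB
    rw [Measure.map_apply measurable_swap (hA.prod hB)]
    have : Prod.swap ⁻¹' (A ×ˢ B) = B ×ˢ A := by ext p; simp [and_comm]
    rw [this, Measure.compProd_apply_prod hB hA, Measure.compProd_apply_prod hA hB]
    exact (rev_sets K m hrev hB hA)
  · rw [Measure.map_apply measurable_swap MeasurableSet.univ]
    simp

lemma vol_aux {b c : ℝ} (hb : 0 ≤ b) :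
    (volume.restrict (Ioi (0:ℝ))) (Ico b c) = ENNReal.ofReal (c - b) := by
  rw [Measure.restrict_apply measurableSet_Ico]
  rcases eq_or_lt_of_le hb with hb0 | hbpos
  · have : Ico b c ∩ Ioi 0 = Ioo 0 c := by
      rw [← hb0]
      ext x
      simp only [mem_inter_iff, mem_Ico, mem_Ioi, mem_Ioo]
      constructor
      · rintro ⟨⟨_, h2⟩, h3⟩; exact ⟨h3, h2⟩
      · rintro ⟨h1, h2⟩; exact ⟨⟨h1.le, h2⟩, h1⟩
    rw [this, Real.volume_Ioo, ← hb0, sub_zero]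
  · have : Ico b c ∩ Ioi 0 = Ico b c := by
      refine inter_eq_self_of_subset_left fun x hx => ?_
      exact lt_of_lt_of_le hbpos hx.1
    rw [this, Real.volume_Ico]

lemma marginal_fst : (m.compProd K).map Prod.fst = m := Measure.fst_compProd m K

lemma marginal_snd (hsymm : (m.compProd K).map Prod.swap = m.compProd K) :
    (m.compProd K).map Prod.snd = m := by
  have : (m.compProd K).map Prod.snd = ((m.compProd K).map Prod.swap).map Prod.fst := by
    rw [Measure.map_map measurable_fst measurable_swap]
    rfl
  rw [this, hsymm]
  exact marginal_fst K m

lemma key_est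
    (hsymm : (m.compProd K).map Prod.swap = m.compProd K)
    (h : X → ℝ) (hm : Measurable h) (hnn : ∀ x, 0 ≤ h x)
    (hhalf : ∀ s : ℝ, 0 < s → m {x | s < h x} ≤ m Set.univ / 2)
    (hL2 : MemLp h 2 m) :
    cheegerConst K m ^ 2 * ∫ x, h x ^ 2 ∂m ≤ 2 * dirichletEnergy2 K m h := by
  set μ := m.compProd K with hμdef
  set κ := cheegerConst K m with hκdef
  have hκ0 : 0 ≤ κ := cheegerConst_nonneg K m
  set κ' := ENNReal.ofReal κ with hκ'def
  set u : X → ℝ := fun x => h x ^ 2 with hudef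
  have hum : Measurable u := hm.pow_const 2
  have hunn : ∀ x, 0 ≤ u x := fun x => sq_nonneg _
  set I := ∫⁻ x, ENNReal.ofReal (u x) ∂m with hIdef
  have hI_top : I ≠ ⊤ := hL2.integrable_sq.lintegral_lt_top.ne
  set E := ∫⁻ p, ENNReal.ofReal ((h p.1 - h p.2) ^ 2) ∂μ with hEdef
  set G := ∫⁻ p, ENNReal.ofReal (u p.1 - u p.2) ∂μ with hGdef
  have hfst : μ.map Prod.fst = m := marginal_fst K m
  have hsnd : μ.map Prod.snd = m := marginal_snd K m hsymm
  -- marginal integrals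
  have hmarg1 : ∫⁻ p, ENNReal.ofReal (u p.1) ∂μ = I := by
    rw [hIdef, ← hfst, lintegral_map (hum.ennreal_ofReal) measurable_fst]
  have hmarg2 : ∫⁻ p, ENNReal.ofReal (u p.2) ∂μ = I := by
    rw [hIdef, ← hsnd, lintegral_map (hum.ennreal_ofReal) measurable_snd]
  -- Step A : κ' * I ≤ G
  have stepA : κ' * I ≤ G := by
    have hlayer : I = ∫⁻ t in Ioi (0:ℝ), m {a | t < u a} := by
      rw [hIdef]
      exact lintegral_eq_lintegral_meas_lt m (Filter.Eventually.of_forall hunn) hum.aemeasurable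
    have hA2 : κ' * I = ∫⁻ t in Ioi (0:ℝ), κ' * m {a | t < u a} := by
      rw [hlayer, ← lintegral_const_mul' κ' _ ENNReal.ofReal_ne_top]
    rw [hA2]
    have hA3 : ∀ t ∈ Ioi (0:ℝ), κ' * m {a | t < u a} ≤
        ∫⁻ x in {a | t < u a}, K x {a | t < u a}ᶜ ∂m := by
      intro t ht
      simp only [mem_Ioi] at ht
      set B := {a | t < u a} with hBdef
      have hBm : MeasurableSet B := measurableSet_lt measurable_const hum
      have hBhalf : m B ≤ m Set.univ / 2 := by
        refine le_trans (measure_mono ?_) (hhalf (Real.sqrt t) (Real.sqrt_pos.mpr ht))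
        intro x hx
        simp only [hBdef, mem_setOf_eq] at hx ⊢
        have hx0 : 0 < h x := by
          rcases lt_or_eq_of_le (hnn x) with h1 | h1
          · exact h1
          · exfalso; rw [hudef] at hx; simp only [← h1] at hx; simp at hx; linarith
        exact (Real.sqrt_lt' hx0).mpr hx
      rcases eq_or_ne (m B) 0 with hB0 | hB0
      · rw [hB0, mul_zero]; exact zero_le
      · have hBfin : m B ≠ ⊤ := (measure_lt_top m B).ne
        have hBpos : 0 < (m B).toReal := ENNReal.toReal_pos hB0 hBfin
        have hmem : boundarySize K m B / (m B).toReal ∈ cheegerSet K m :=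
          ⟨B, hBm, pos_iff_ne_zero.mpr hB0, hBhalf, rfl⟩
        have hκle : κ ≤ boundarySize K m B / (m B).toReal := by
          rw [hκdef, cheegerConst_eq]
          exact csInf_le (cheegerSet_bddBelow K m) hmem
        have hreal : κ * (m B).toReal ≤ boundarySize K m B := by
          rw [← le_div_iff₀ hBpos]; exact hκle
        have := ENNReal.ofReal_le_ofReal hreal
        rw [ENNReal.ofReal_mul hκ0, ENNReal.ofReal_toReal hBfin] at this
        rwa [boundarySize, ENNReal.ofReal_toReal (lint_ne_top K m B Bᶜ)] at this
    -- rewrite boundary as a compProd measure and use coarea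
    set S : Set (ℝ × (X × X)) := {q | u q.2.2 ≤ q.1 ∧ q.1 < u q.2.1} with hSdef
    have hSm : MeasurableSet S := by
      refine MeasurableSet.inter ?_ ?_
      · exact measurableSet_le (hum.comp (measurable_snd.comp measurable_snd)) measurable_fst
      · exact measurableSet_lt measurable_fst (hum.comp (measurable_fst.comp measurable_snd))
    set F : ℝ → X × X → ℝ≥0∞ := fun t p => S.indicator 1 (t, p) with hFdef
    have hA4 : ∀ t : ℝ, (∫⁻ x in {a | t < u a}, K x {a | t < u a}ᶜ ∂m)
        = ∫⁻ p, F t p ∂μ := by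
      intro t
      have hBm : MeasurableSet {a | t < u a} := measurableSet_lt measurable_const hum
      rw [← Measure.compProd_apply_prod hBm hBm.compl, ← hμdef,
        ← lintegral_indicator_one (hBm.prod hBm.compl)]
      refine lintegral_congr fun p => ?_
      rw [hFdef]
      simp only [Set.indicator_apply, Set.mem_prod, mem_setOf_eq, mem_compl_iff, hSdef]
      congr 1
      simp only [eq_iff_iff, not_lt]
      tauto
    have hmono : (∫⁻ t in Ioi (0:ℝ), κ' * m {a | t < u a})
        ≤ ∫⁻ t in Ioi (0:ℝ), ∫⁻ p, F t p ∂μ := by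
      refine lintegral_mono_ae ?_
      filter_upwards [ae_restrict_mem measurableSet_Ioi] with t ht
      rw [← hA4 t]
      exact hA3 t ht
    refine le_trans hmono (le_of_eq ?_)
    have hswap : (∫⁻ t in Ioi (0:ℝ), ∫⁻ p, F t p ∂μ)
        = ∫⁻ p, ∫⁻ t in Ioi (0:ℝ), F t p ∂volume ∂μ := by
      refine lintegral_lintegral_swap ?_
      have : Function.uncurry F = S.indicator 1 := by
        funext q
        rw [hFdef, Function.uncurry]
      rw [this]
      exact ((measurable_one.indicator hSm)).aemeasurable
    rw [hswap, hGdef]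
    refine lintegral_congr fun p => ?_
    have hFt : ∀ t : ℝ, F t p = (Ico (u p.2) (u p.1)).indicator 1 t := by
      intro t
      rw [hFdef]
      simp only [Set.indicator_apply, hSdef, mem_setOf_eq, mem_Ico]
      split_ifs <;> rfl
    simp_rw [hFt]
    rw [lintegral_indicator_one measurableSet_Ico]
    exact vol_aux (hunn p.2)
  -- Step B : symmetry, 2 • G = ∫⁻ |u1 - u2|
  have hgm2 : Measurable fun p : X × X => ENNReal.ofReal (u p.1 - u p.2) := by
    exact ((hum.comp measurable_fst).sub (hum.comp measurable_snd)).ennreal_ofReal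
  have hgm1 : Measurable fun p : X × X => (2:ℝ≥0∞) * ENNReal.ofReal (u p.1) := by
    exact ((hum.comp measurable_fst).ennreal_ofReal).const_mul 2
  have hsymG : G = ∫⁻ p, ENNReal.ofReal (u p.2 - u p.1) ∂μ := by
    calc G = ∫⁻ p, ENNReal.ofReal (u p.1 - u p.2) ∂(μ.map Prod.swap) := by rw [hsymm]
      _ = ∫⁻ p, ENNReal.ofReal (u (Prod.swap p).1 - u (Prod.swap p).2) ∂μ :=
          lintegral_map hgm2 measurable_swap
      _ = ∫⁻ p, ENNReal.ofReal (u p.2 - u p.1) ∂μ := by rfl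
  have habs : G + G = ∫⁻ p, ENNReal.ofReal |u p.1 - u p.2| ∂μ := by
    nth_rewrite 2 [hsymG]
    rw [hGdef, ← lintegral_add_left hgm2]
    refine lintegral_congr fun p => ?_
    rcases le_total (u p.1) (u p.2) with hc | hc
    · rw [ENNReal.ofReal_of_nonpos (by linarith : u p.1 - u p.2 ≤ 0), zero_add,
        abs_of_nonpos (by linarith : u p.1 - u p.2 ≤ 0)]
      congr 1; ring
    · rw [ENNReal.ofReal_of_nonpos (by linarith : u p.2 - u p.1 ≤ 0), add_zero,
        abs_of_nonneg (by linarith : 0 ≤ u p.1 - u p.2)]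
  -- Step C : Cauchy-Schwarz bound
  set F1 : X × X → ℝ≥0∞ := fun p => ENNReal.ofReal |h p.1 - h p.2| with hF1def
  set F2 : X × X → ℝ≥0∞ := fun p => ENNReal.ofReal (h p.1 + h p.2) with hF2def
  have hF1m : Measurable F1 :=
    (((hm.comp measurable_fst).sub (hm.comp measurable_snd)).abs).ennreal_ofReal
  have hF2m : Measurable F2 :=
    ((hm.comp measurable_fst).add (hm.comp measurable_snd)).ennreal_ofReal
  have hprod : ∀ p : X × X, ENNReal.ofReal |u p.1 - u p.2| = F1 p * F2 p := by
    intro p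
    rw [hF1def, hF2def]
    simp only []
    rw [← ENNReal.ofReal_mul (abs_nonneg _)]
    congr 1
    have : u p.1 - u p.2 = (h p.1 - h p.2) * (h p.1 + h p.2) := by rw [hudef]; ring
    rw [this, abs_mul, abs_of_nonneg (add_nonneg (hnn p.1) (hnn p.2))]
  have hconj : Real.HolderConjugate 2 2 := Real.HolderConjugate.two_two
  have hCS : (∫⁻ p, ENNReal.ofReal |u p.1 - u p.2| ∂μ)
      ≤ (∫⁻ p, F1 p ^ (2:ℝ) ∂μ) ^ (1/2:ℝ) * (∫⁻ p, F2 p ^ (2:ℝ) ∂μ) ^ (1/2:ℝ) := by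
    have := ENNReal.lintegral_mul_le_Lp_mul_Lq μ hconj hF1m.aemeasurable hF2m.aemeasurable
    refine le_trans (le_of_eq ?_) this
    refine lintegral_congr fun p => ?_
    rw [hprod p]
    rfl
  have hF1sq : (∫⁻ p, F1 p ^ (2:ℝ) ∂μ) = E := by
    rw [hEdef]
    refine lintegral_congr fun p => ?_
    rw [hF1def]
    simp only []
    rw [ENNReal.ofReal_rpow_of_nonneg (abs_nonneg _) (by norm_num)]
    congr 1
    rw [show (2:ℝ) = ((2:ℕ):ℝ) by norm_num, Real.rpow_natCast, sq_abs]
  have hF2sq : (∫⁻ p, F2 p ^ (2:ℝ) ∂μ) ≤ 4 * I := by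
    have hpt : ∀ p : X × X, F2 p ^ (2:ℝ)
        ≤ 2 * ENNReal.ofReal (u p.1) + 2 * ENNReal.ofReal (u p.2) := by
      intro p
      rw [hF2def]
      simp only []
      rw [ENNReal.ofReal_rpow_of_nonneg (add_nonneg (hnn p.1) (hnn p.2)) (by norm_num)]
      have h2 : (h p.1 + h p.2) ^ (2:ℝ) = (h p.1 + h p.2) ^ 2 := by
        rw [show (2:ℝ) = ((2:ℕ):ℝ) by norm_num, Real.rpow_natCast]
      rw [h2]
      have hb : (h p.1 + h p.2) ^ 2 ≤ 2 * u p.1 + 2 * u p.2 := by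
        simp only [hudef]; nlinarith [sq_nonneg (h p.1 - h p.2)]
      refine le_trans (ENNReal.ofReal_le_ofReal hb) (le_of_eq ?_)
      rw [ENNReal.ofReal_add (by positivity) (by positivity),
        ENNReal.ofReal_mul (by norm_num), ENNReal.ofReal_mul (by norm_num)]
      norm_num
    refine le_trans (lintegral_mono hpt) (le_of_eq ?_)
    rw [lintegral_add_left hgm1,
      lintegral_const_mul' _ _ (by norm_num : (2:ℝ≥0∞) ≠ ⊤),
      lintegral_const_mul' _ _ (by norm_num : (2:ℝ≥0∞) ≠ ⊤), hmarg1, hmarg2]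
    ring
  -- Step D : conclude κ'^2 * I ≤ E in ℝ≥0∞
  have hD : κ' ^ 2 * I ≤ E := by
    have h2G : 2 * (κ' * I) ≤ E ^ (1/2:ℝ) * (4 * I) ^ (1/2:ℝ) := by
      calc 2 * (κ' * I) = κ' * I + κ' * I := by ring
        _ ≤ G + G := add_le_add stepA stepA
        _ = ∫⁻ p, ENNReal.ofReal |u p.1 - u p.2| ∂μ := habs
        _ ≤ (∫⁻ p, F1 p ^ (2:ℝ) ∂μ) ^ (1/2:ℝ) * (∫⁻ p, F2 p ^ (2:ℝ) ∂μ) ^ (1/2:ℝ) := hCS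
        _ ≤ E ^ (1/2:ℝ) * (4 * I) ^ (1/2:ℝ) := by
            rw [hF1sq]
            exact mul_le_mul_right (ENNReal.rpow_le_rpow hF2sq (by norm_num)) _
    rcases eq_or_ne I 0 with hI0 | hI0
    · rw [hI0, mul_zero]; exact zero_le
    have hsq := mul_le_mul' h2G h2G
    have hLHS : (2 * (κ' * I)) * (2 * (κ' * I)) = 4 * (κ' ^ 2 * I * I) := by ring
    have hRHS : (E ^ (1/2:ℝ) * (4 * I) ^ (1/2:ℝ)) * (E ^ (1/2:ℝ) * (4 * I) ^ (1/2:ℝ))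
        = 4 * (E * I) := by
      have he : E ^ (1/2:ℝ) * E ^ (1/2:ℝ) = E := by
        rw [← ENNReal.rpow_add_of_nonneg _ _ (by norm_num) (by norm_num)]
        norm_num
      have hi : (4 * I) ^ (1/2:ℝ) * (4 * I) ^ (1/2:ℝ) = 4 * I := by
        rw [← ENNReal.rpow_add_of_nonneg _ _ (by norm_num) (by norm_num)]
        norm_num
      calc (E ^ (1/2:ℝ) * (4 * I) ^ (1/2:ℝ)) * (E ^ (1/2:ℝ) * (4 * I) ^ (1/2:ℝ))
          = (E ^ (1/2:ℝ) * E ^ (1/2:ℝ)) * ((4 * I) ^ (1/2:ℝ) * (4 * I) ^ (1/2:ℝ)) := by ring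
        _ = E * (4 * I) := by rw [he, hi]
        _ = 4 * (E * I) := by ring
    rw [hLHS, hRHS] at hsq
    have hcancel4 : κ' ^ 2 * I * I ≤ E * I := by
      have h4 : (4:ℝ≥0∞) ≠ 0 := by norm_num
      have h4t : (4:ℝ≥0∞) ≠ ⊤ := by norm_num
      exact (ENNReal.mul_le_mul_iff_right h4 h4t).mp hsq
    exact (ENNReal.mul_le_mul_iff_left hI0 hI_top).mp hcancel4
  -- Step E : realize
  have hE_le : E ≤ 4 * I := by
    have hpt : ∀ p : X × X, ENNReal.ofReal ((h p.1 - h p.2) ^ 2)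
        ≤ 2 * ENNReal.ofReal (u p.1) + 2 * ENNReal.ofReal (u p.2) := by
      intro p
      have hb : (h p.1 - h p.2) ^ 2 ≤ 2 * u p.1 + 2 * u p.2 := by
        simp only [hudef]; nlinarith [sq_nonneg (h p.1 + h p.2)]
      refine le_trans (ENNReal.ofReal_le_ofReal hb) (le_of_eq ?_)
      rw [ENNReal.ofReal_add (by positivity) (by positivity),
        ENNReal.ofReal_mul (by norm_num), ENNReal.ofReal_mul (by norm_num)]
      norm_num
    refine le_trans (lintegral_mono hpt) (le_of_eq ?_)
    rw [lintegral_add_left hgm1,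
      lintegral_const_mul' _ _ (by norm_num : (2:ℝ≥0∞) ≠ ⊤),
      lintegral_const_mul' _ _ (by norm_num : (2:ℝ≥0∞) ≠ ⊤), hmarg1, hmarg2]
    ring
  have hE_top : E ≠ ⊤ := by
    refine ne_of_lt (lt_of_le_of_lt hE_le ?_)
    exact ENNReal.mul_lt_top (by norm_num) (lt_top_iff_ne_top.mpr hI_top)
  have hIreal : ∫ x, h x ^ 2 ∂m = I.toReal := by
    rw [hIdef, integral_eq_lintegral_of_nonneg_ae (Filter.Eventually.of_forall hunn)
      hum.aestronglyMeasurable]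
  have hEreal : ∫ p, (h p.1 - h p.2) ^ 2 ∂μ = E.toReal := by
    have hdm : AEStronglyMeasurable (fun p : X × X => (h p.1 - h p.2) ^ 2) μ := by
      exact (((hm.comp measurable_fst).sub (hm.comp measurable_snd)).pow_const
        2).aestronglyMeasurable
    rw [hEdef, integral_eq_lintegral_of_nonneg_ae
      (Filter.Eventually.of_forall fun p => sq_nonneg _) hdm]
  have hfinal := ENNReal.toReal_mono hE_top hD
  rw [ENNReal.toReal_mul] at hfinal
  have hκ'2 : (κ' ^ 2).toReal = κ ^ 2 := by
    rw [ENNReal.toReal_pow, hκ'def, ENNReal.toReal_ofReal hκ0]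
  rw [hκ'2] at hfinal
  rw [hIreal, dirichletEnergy2]
  rw [← hμdef, hEreal]
  linarith

lemma parts_sq_le (a b : ℝ) :
    (max a 0 - max b 0) ^ 2 + (max (-a) 0 - max (-b) 0) ^ 2 ≤ (a - b) ^ 2 := by
  rcases le_total a 0 with ha | ha <;> rcases le_total b 0 with hb | hb
  · rw [max_eq_right ha, max_eq_right hb, max_eq_left (by linarith), max_eq_left (by linarith)]
    nlinarith
  · rw [max_eq_right ha, max_eq_left hb, max_eq_left (by linarith), max_eq_right (by linarith)]
    nlinarith [mul_nonpos_of_nonpos_of_nonneg ha hb]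
  · rw [max_eq_left ha, max_eq_right hb, max_eq_right (by linarith), max_eq_left (by linarith)]
    nlinarith [mul_nonneg ha (neg_nonneg.mpr hb)]
  · rw [max_eq_left ha, max_eq_left hb, max_eq_right (by linarith), max_eq_right (by linarith)]
    nlinarith

lemma integrable_diff_sq (hsnd : (m.compProd K).map Prod.snd = m)
    {h : X → ℝ} (hm : Measurable h) (hL2 : MemLp h 2 m) :
    Integrable (fun p : X × X => (h p.1 - h p.2) ^ 2) (m.compProd K) := by
  have hsq : Integrable (fun x => h x ^ 2) m := hL2.integrable_sq
  have i1 : Integrable (fun p : X × X => h p.1 ^ 2) (m.compProd K) := by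
    have h1 : Integrable ((fun x => h x ^ 2) ∘ Prod.fst) (m.compProd K) := by
      rw [← integrable_map_measure ((hm.pow_const 2).aestronglyMeasurable)
        measurable_fst.aemeasurable, marginal_fst K m]
      exact hsq
    exact h1
  have i2 : Integrable (fun p : X × X => h p.2 ^ 2) (m.compProd K) := by
    have h1 : Integrable ((fun x => h x ^ 2) ∘ Prod.snd) (m.compProd K) := by
      rw [← integrable_map_measure ((hm.pow_const 2).aestronglyMeasurable)
        measurable_snd.aemeasurable, hsnd]
      exact hsq
    exact h1
  have hmeas : AEStronglyMeasurable (fun p : X × X => (h p.1 - h p.2) ^ 2) (m.compProd K) := by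
    exact (((hm.comp measurable_fst).sub (hm.comp measurable_snd)).pow_const
      2).aestronglyMeasurable
  refine ((i1.const_mul 2).add (i2.const_mul 2)).mono' hmeas ?_
  refine Filter.Eventually.of_forall fun p => ?_
  rw [Real.norm_eq_abs, abs_of_nonneg (sq_nonneg _)]
  simp only [Pi.add_apply]
  nlinarith [sq_nonneg (h p.1 + h p.2)]

lemma main_est
    (hsymm : (m.compProd K).map Prod.swap = m.compProd K)
    (f : X → ℝ) (hf : MemLp f 2 m) (h0 : ∫ x, f x ∂m = 0)
    (hsq : 0 < ∫ x, f x ^ 2 ∂m) :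
    cheegerConst K m ^ 2 * ∫ x, f x ^ 2 ∂m ≤ 2 * dirichletEnergy2 K m f := by
  set μ := m.compProd K with hμdef
  have hfst : μ.map Prod.fst = m := marginal_fst K m
  have hsnd : μ.map Prod.snd = m := marginal_snd K m hsymm
  set κ := cheegerConst K m with hκdef
  have hκ0 : 0 ≤ κ := cheegerConst_nonneg K m
  -- measurable representative
  set f' := hf.aestronglyMeasurable.mk f with hf'def
  have hff' : f =ᵐ[m] f' := hf.aestronglyMeasurable.ae_eq_mk
  have hf'm : Measurable f' := hf.aestronglyMeasurable.measurable_mk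
  have hf'2 : MemLp f' 2 m := hf.ae_eq hff'
  have h0' : ∫ x, f' x ∂m = 0 := by rw [← integral_congr_ae hff']; exact h0
  have hsqeq : ∫ x, f x ^ 2 ∂m = ∫ x, f' x ^ 2 ∂m :=
    integral_congr_ae (hff'.mono fun x hx => by
      show f x ^ 2 = f' x ^ 2
      rw [hx])
  have hEeq : dirichletEnergy2 K m f = dirichletEnergy2 K m f' := by
    unfold dirichletEnergy2
    congr 1
    refine integral_congr_ae ?_
    have h1 : (fun p : X × X => f p.1) =ᵐ[μ] fun p => f' p.1 :=
      ae_eq_comp measurable_fst.aemeasurable (by rw [hfst]; exact hff')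
    have h2 : (fun p : X × X => f p.2) =ᵐ[μ] fun p => f' p.2 :=
      ae_eq_comp measurable_snd.aemeasurable (by rw [hsnd]; exact hff')
    filter_upwards [h1, h2] with p hp1 hp2
    rw [hp1, hp2]
  rw [hsqeq, hEeq]
  have hsq' : 0 < ∫ x, f' x ^ 2 ∂m := by rw [← hsqeq]; exact hsq
  -- m univ is positive
  have hmX : m Set.univ ≠ 0 := by
    intro hc
    have : m = 0 := Measure.measure_univ_eq_zero.mp hc
    rw [this] at hsq'
    simp at hsq'
  have hmXfin : m Set.univ ≠ ⊤ := measure_ne_top m _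
  have hhalfpos : 0 < m Set.univ / 2 := ENNReal.div_pos hmX (by norm_num)
  have hhalflt : m Set.univ / 2 < m Set.univ := ENNReal.half_lt_self hmX hmXfin
  -- median
  set Tset : Set ℝ := {t : ℝ | m {x | t < f' x} ≤ m Set.univ / 2} with hTdef
  have hTne : Tset.Nonempty := by
    have hanti : Antitone fun n : ℕ => {x | (n:ℝ) < f' x} := by
      intro i j hij x hx
      simp only [mem_setOf_eq] at hx ⊢
      exact lt_of_le_of_lt (by exact_mod_cast hij) hx
    have hint : (⋂ n : ℕ, {x | (n:ℝ) < f' x}) = ∅ := by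
      ext x
      simp only [mem_iInter, mem_setOf_eq, mem_empty_iff_false, iff_false, not_forall, not_lt]
      obtain ⟨n, hn⟩ := exists_nat_gt (f' x)
      exact ⟨n, hn.le⟩
    have htend := tendsto_measure_iInter_atTop
      (fun n => (measurableSet_lt measurable_const hf'm).nullMeasurableSet) hanti
      ⟨0, measure_ne_top m _⟩
    rw [hint, measure_empty] at htend
    have := htend.eventually_lt_const hhalfpos
    obtain ⟨n, hn⟩ := this.exists
    exact ⟨(n : ℝ), le_of_lt hn⟩
  have hTbdd : BddBelow Tset := by
    have hmono : Monotone fun n : ℕ => {x | -(n:ℝ) < f' x} := by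
      intro i j hij x hx
      simp only [mem_setOf_eq] at hx ⊢
      refine lt_of_le_of_lt ?_ hx
      simp only [neg_le_neg_iff]
      exact_mod_cast hij
    have huni : (⋃ n : ℕ, {x | -(n:ℝ) < f' x}) = Set.univ := by
      ext x
      simp only [mem_iUnion, mem_setOf_eq, mem_univ, iff_true]
      obtain ⟨n, hn⟩ := exists_nat_gt (-(f' x))
      exact ⟨n, by linarith⟩
    have htend := tendsto_measure_iUnion_atTop (μ := m) hmono
    rw [huni] at htend
    have := htend.eventually_const_lt hhalflt
    obtain ⟨n, hn⟩ := this.exists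
    refine ⟨-(n:ℝ), fun t ht => ?_⟩
    by_contra hc
    push_neg at hc
    have hsub : {x | -(n:ℝ) < f' x} ⊆ {x | t < f' x} :=
      fun x hx => lt_trans hc hx
    have : m {x | -(n:ℝ) < f' x} ≤ m Set.univ / 2 := le_trans (measure_mono hsub) ht
    exact absurd (lt_of_lt_of_le hn this) (lt_irrefl _)
  set c := sInf Tset with hcdef
  set g : X → ℝ := fun x => f' x - c with hgdef
  set hp : X → ℝ := fun x => max (g x) 0 with hpdef
  set hq : X → ℝ := fun x => max (-g x) 0 with hqdef
  have hgm : Measurable g := hf'm.sub measurable_const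
  have hpm : Measurable hp := hgm.max measurable_const
  have hqm : Measurable hq := hgm.neg.max measurable_const
  have hpnn : ∀ x, 0 ≤ hp x := fun x => le_max_right _ _
  have hqnn : ∀ x, 0 ≤ hq x := fun x => le_max_right _ _
  have hg2 : MemLp g 2 m := hf'2.sub (memLp_const c)
  have hp2 : MemLp hp 2 m := by
    refine hg2.of_le hpm.aestronglyMeasurable (Filter.Eventually.of_forall fun x => ?_)
    rw [Real.norm_eq_abs, Real.norm_eq_abs, hpdef]
    simp only []
    rcases le_total (g x) 0 with hc | hc
    · rw [max_eq_right hc, abs_zero]; exact abs_nonneg _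
    · rw [max_eq_left hc]
  have hq2 : MemLp hq 2 m := by
    refine hg2.of_le hqm.aestronglyMeasurable (Filter.Eventually.of_forall fun x => ?_)
    rw [Real.norm_eq_abs, Real.norm_eq_abs, hqdef]
    simp only []
    rcases le_total (-g x) 0 with hc | hc
    · rw [max_eq_right hc, abs_zero]; exact abs_nonneg _
    · rw [max_eq_left hc, abs_neg]
  -- half-space conditions
  have hhp : ∀ s : ℝ, 0 < s → m {x | s < hp x} ≤ m Set.univ / 2 := by
    intro s hs
    obtain ⟨t, htT, htlt⟩ := (csInf_lt_iff hTbdd hTne).mp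
      (lt_add_of_pos_right c hs)
    refine le_trans (measure_mono ?_) htT
    intro x hx
    simp only [hpdef, mem_setOf_eq, lt_max_iff] at hx
    rcases hx with hx | hx
    · simp only [hgdef, mem_setOf_eq] at hx ⊢
      linarith
    · linarith
  have hhq : ∀ s : ℝ, 0 < s → m {x | s < hq x} ≤ m Set.univ / 2 := by
    intro s hs
    have hnotmem : (c - s) ∉ Tset := fun hmem =>
      absurd (csInf_le hTbdd hmem) (not_le.mpr (by linarith [hcdef ▸ (lt_of_lt_of_le (sub_lt_self c hs) (le_refl c))]))
    have hgt : m Set.univ / 2 < m {x | c - s < f' x} := not_le.mp hnotmem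
    have hsub : {x | s < hq x} ⊆ {x | c - s < f' x}ᶜ := by
      intro x hx
      simp only [hqdef, hgdef, mem_setOf_eq, lt_max_iff, mem_compl_iff, not_lt] at hx ⊢
      rcases hx with hx | hx
      · linarith
      · linarith
    refine le_trans (measure_mono hsub) ?_
    rw [measure_compl (measurableSet_lt measurable_const hf'm) (measure_ne_top m _)]
    calc m Set.univ - m {x | c - s < f' x} ≤ m Set.univ - m Set.univ / 2 :=
          tsub_le_tsub_left hgt.le _
      _ = m Set.univ / 2 := ENNReal.sub_half hmXfin
  -- apply key estimate to both parts
  have hkeyp := key_est K m hsymm hp hpm hpnn hhp hp2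
  have hkeyq := key_est K m hsymm hq hqm hqnn hhq hq2
  -- squares add up
  have hsqadd : (∫ x, hp x ^ 2 ∂m) + (∫ x, hq x ^ 2 ∂m) = ∫ x, g x ^ 2 ∂m := by
    rw [← integral_add hp2.integrable_sq hq2.integrable_sq]
    refine integral_congr_ae (Filter.Eventually.of_forall fun x => ?_)
    simp only [hpdef, hqdef]
    rcases le_total (g x) 0 with hc | hc
    · rw [max_eq_right hc, max_eq_left (by linarith)]; ring
    · rw [max_eq_left hc, max_eq_right (by linarith)]; ring
  -- ∫ f'^2 ≤ ∫ g^2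
  have hgf : ∫ x, f' x ^ 2 ∂m ≤ ∫ x, g x ^ 2 ∂m := by
    have hexp : ∀ x, g x ^ 2 = f' x ^ 2 - (2 * c) * f' x + c ^ 2 := by
      intro x; simp only [hgdef]; ring
    have hint1 : Integrable (fun x => f' x ^ 2) m := hf'2.integrable_sq
    have hint2 : Integrable (fun x => (2 * c) * f' x) m :=
      (hf'2.integrable one_le_two).const_mul _
    have hint12 : Integrable (fun x => f' x ^ 2 - (2 * c) * f' x) m := by
      exact hint1.sub hint2
    have : ∫ x, g x ^ 2 ∂m = ∫ x, f' x ^ 2 ∂m - (2 * c) * ∫ x, f' x ∂m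
        + c ^ 2 * (m Set.univ).toReal := by
      simp_rw [hexp]
      rw [integral_add hint12 (integrable_const _), integral_sub hint1 hint2,
        integral_const_mul, integral_const]
      simp [smul_eq_mul, mul_comm, measureReal_def]
    rw [this, h0']
    have : 0 ≤ c ^ 2 * (m Set.univ).toReal := by positivity
    linarith
  -- energies add up below the energy of f'
  have hEsplit : dirichletEnergy2 K m hp + dirichletEnergy2 K m hq
      ≤ dirichletEnergy2 K m f' := by
    unfold dirichletEnergy2
    rw [← mul_add]
    have hintp := integrable_diff_sq K m hsnd hpm hp2
    have hintq := integrable_diff_sq K m hsnd hqm hq2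
    have hintf := integrable_diff_sq K m hsnd hf'm hf'2
    rw [← integral_add hintp hintq]
    have hmono : ∫ p, ((hp p.1 - hp p.2) ^ 2 + (hq p.1 - hq p.2) ^ 2) ∂μ
        ≤ ∫ p, (f' p.1 - f' p.2) ^ 2 ∂μ := by
      refine integral_mono (hintp.add hintq) hintf fun p => ?_
      simp only [hpdef, hqdef]
      have := parts_sq_le (g p.1) (g p.2)
      have heq : g p.1 - g p.2 = f' p.1 - f' p.2 := by simp only [hgdef]; ring
      rw [heq] at this
      exact this
    have h05 : (0:ℝ) < 1/2 := by norm_num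
    linarith
  -- combine
  calc κ ^ 2 * ∫ x, f' x ^ 2 ∂m ≤ κ ^ 2 * ∫ x, g x ^ 2 ∂m := by
        refine mul_le_mul_of_nonneg_left hgf (by positivity)
    _ = κ ^ 2 * ∫ x, hp x ^ 2 ∂m + κ ^ 2 * ∫ x, hq x ^ 2 ∂m := by rw [← hsqadd]; ring
    _ ≤ 2 * dirichletEnergy2 K m hp + 2 * dirichletEnergy2 K m hq := add_le_add hkeyp hkeyq
    _ ≤ 2 * dirichletEnergy2 K m f' := by linarith [hEsplit]

lemma exists_test_function
    (hrevsets : ∀ {A B : Set X}, MeasurableSet A → MeasurableSet B →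
      ∫⁻ x in A, K x B ∂m = ∫⁻ x in B, K x A ∂m)
    {A : Set X} (hA : MeasurableSet A) (hpos : 0 < m A) (hhalf : m A ≤ m Set.univ / 2) :
    ∃ f : X → ℝ, MemLp f 2 m ∧ (∫ x, f x ∂m) = 0 ∧ (0 < ∫ x, f x ^ 2 ∂m) ∧
      dirichletEnergy2 K m f = boundarySize K m A ∧
      (m A).toReal / 2 ≤ ∫ x, f x ^ 2 ∂m := by
  unfold dirichletEnergy2 boundarySize
  set a := (m A).toReal with ha
  set T := (m Set.univ).toReal with hT
  have hAfin : m A ≠ ⊤ := (lt_of_le_of_lt (measure_mono (subset_univ _)) (measure_lt_top m _)).ne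
  have hapos : 0 < a := ENNReal.toReal_pos hpos.ne' hAfin
  have hTpos : 0 < T := lt_of_lt_of_le hapos (ENNReal.toReal_mono (measure_ne_top m _)
    (measure_mono (subset_univ _)))
  have haT : a ≤ T / 2 := by
    have h2 : (m Set.univ / 2).toReal = T / 2 := by
      rw [ENNReal.toReal_div]
      norm_num
      exact hT.symm
    have hne : m Set.univ / 2 ≠ ⊤ := by
      refine ne_of_lt (lt_of_le_of_lt (ENNReal.half_le_self) (measure_lt_top m _))
    have := ENNReal.toReal_mono hne hhalf
    rwa [h2] at this
  set r := a / T with hr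
  set f : X → ℝ := fun x => A.indicator 1 x - r with hf
  have hfm : Measurable f := ((measurable_one.indicator hA)).sub measurable_const
  have hbnd : ∀ x, ‖f x‖ ≤ 1 + |r| := by
    intro x
    rw [Real.norm_eq_abs]
    by_cases hx : x ∈ A
    · simp only [hf, indicator_of_mem hx, Pi.one_apply]
      have := abs_sub (1:ℝ) r
      calc |1 - r| ≤ |1| + |r| := abs_sub _ _
        _ = 1 + |r| := by norm_num
    · simp only [hf, indicator_of_notMem hx]
      have : |0 - r| = |r| := by rw [zero_sub, abs_neg]
      rw [this]
      linarith [abs_nonneg r]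
  have hmem : MemLp f 2 m :=
    (memLp_top_of_bound hfm.aestronglyMeasurable _ (Filter.Eventually.of_forall hbnd)).mono_exponent le_top
  have hind_int : Integrable (fun x => A.indicator (1 : X → ℝ) x) m :=
    (integrable_const (1:ℝ)).indicator hA
  have hint0 : ∫ x, f x ∂m = 0 := by
    rw [hf]
    rw [integral_sub hind_int (integrable_const r)]
    rw [integral_indicator_one hA, integral_const]
    simp only [smul_eq_mul, measureReal_def, ← ha, ← hT, hr]
    field_simp
    ring
  have hsqeq : ∀ x, f x ^ 2 = A.indicator (fun _ => ((1 - r)^2 - r^2)) x + r^2 := by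
    intro x
    by_cases hx : x ∈ A
    · simp only [hf, indicator_of_mem hx, Pi.one_apply]
      ring
    · simp only [hf, indicator_of_notMem hx]
      ring
  have hsqval : ∫ x, f x ^ 2 ∂m = ((1 - r)^2 - r^2) * a + r^2 * T := by
    simp_rw [hsqeq]
    rw [integral_add ((integrable_const _).indicator hA) (integrable_const _)]
    rw [integral_indicator_const _ hA, integral_const]
    simp only [smul_eq_mul, measureReal_def, ← ha, ← hT]
    ring
  have hval : ∫ x, f x ^ 2 ∂m = a - a^2/T := by
    rw [hsqval, hr]
    field_simp
    ring
  have hge : a / 2 ≤ ∫ x, f x ^ 2 ∂m := by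
    rw [hval]
    have h1 : a^2/T ≤ a/2 := by
      rw [div_le_iff₀ hTpos]
      nlinarith
    linarith
  have hsqpos : 0 < ∫ x, f x ^ 2 ∂m := lt_of_lt_of_le (by positivity) hge
  refine ⟨f, hmem, hint0, hsqpos, ?_, hge⟩
  -- energy computation
  set μ := m.compProd K with hμ
  set s : Set (X × X) := (A ×ˢ Aᶜ) ∪ (Aᶜ ×ˢ A) with hs
  have hsm : MeasurableSet s := (hA.prod hA.compl).union (hA.compl.prod hA)
  have hptwise : ∀ p : X × X, (f p.1 - f p.2) ^ 2 = s.indicator 1 p := by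
    rintro ⟨x, y⟩
    have : f x - f y = A.indicator 1 x - A.indicator 1 y := by rw [hf]; ring
    rw [this]
    by_cases hx : x ∈ A <;> by_cases hy : y ∈ A <;>
      simp [hs, indicator_of_mem, indicator_of_notMem, hx, hy, Set.indicator_apply,
        Set.mem_prod]
  have hE : ∫ p, (f p.1 - f p.2) ^ 2 ∂μ = (μ s).toReal := by
    simp_rw [hptwise]
    exact integral_indicator_one hsm
  have hμ1 : μ (A ×ˢ Aᶜ) = ∫⁻ x in A, K x Aᶜ ∂m := Measure.compProd_apply_prod hA hA.compl
  have hμ2 : μ (Aᶜ ×ˢ A) = ∫⁻ x in A, K x Aᶜ ∂m := by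
    rw [Measure.compProd_apply_prod hA.compl hA]
    exact (hrevsets hA hA.compl).symm
  have hdisj : Disjoint (A ×ˢ Aᶜ) (Aᶜ ×ˢ A) := by
    rw [Set.disjoint_left]
    rintro ⟨x, y⟩ hp hq
    exact absurd hp.1 hq.1
  have hμs : μ s = ∫⁻ x in A, K x Aᶜ ∂m + ∫⁻ x in A, K x Aᶜ ∂m := by
    rw [hs, measure_union hdisj (hA.compl.prod hA), hμ1, hμ2]
  rw [hE, hμs, ENNReal.toReal_add (lint_ne_top K m A Aᶜ) (lint_ne_top K m A Aᶜ)]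
  ring


/-- If the gap set is nonempty, so is the Cheeger set. -/
lemma cheegerSet_nonempty_of_gapSet (h : (gapSet K m).Nonempty) :
    (cheegerSet K m).Nonempty := by
  obtain ⟨q, f, hf, hint0, hsq, rfl⟩ := h
  set f' := hf.aestronglyMeasurable.mk f with hf'def
  have hff' : f =ᵐ[m] f' := hf.aestronglyMeasurable.ae_eq_mk
  have hf'm : Measurable f' := hf.aestronglyMeasurable.measurable_mk
  have hint0' : ∫ x, f' x ∂m = 0 := by rw [← integral_congr_ae hff']; exact hint0
  have hsq' : 0 < ∫ x, f' x ^ 2 ∂m := by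
    have : (fun x => f x ^ 2) =ᵐ[m] fun x => f' x ^ 2 := hff'.mono fun x hx => by simp only []; rw [hx]
    rw [← integral_congr_ae this]; exact hsq
  have hint : Integrable f' m := (hf.integrable one_le_two).congr hff'
  have hf'2 : MemLp f' 2 m := hf.ae_eq hff'
  -- both {f' > 0} and {f' < 0} have positive measure
  have hP : 0 < m {x | 0 < f' x} := by
    by_contra h
    push_neg at h
    have hz : m {x | 0 < f' x} = 0 := le_antisymm h zero_le
    have hle : ∀ᵐ x ∂m, 0 ≤ -f' x := by
      rw [ae_iff]
      convert hz using 2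
      ext x
      constructor
      · intro hx
        simp only [mem_setOf_eq] at hx ⊢
        have := lt_of_not_ge hx
        linarith
      · intro hx
        simp only [mem_setOf_eq] at hx ⊢
        intro hc
        linarith
    have := (integral_eq_zero_iff_of_nonneg_ae hle hint.neg).mp (by rw [integral_neg, hint0', neg_zero])
    have hz2 : f' =ᵐ[m] 0 := this.mono fun x hx => by
      have h5 : -f' x = 0 := hx
      simpa using (neg_eq_zero.mp h5)
    have : ∫ x, f' x ^ 2 ∂m = 0 := by
      have h2 : (fun x => f' x ^ 2) =ᵐ[m] fun _ => (0:ℝ) := hz2.mono fun x hx => by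
        simp [hx]
      rw [integral_congr_ae h2]; simp
    exact absurd this hsq'.ne'
  have hN : 0 < m {x | f' x < 0} := by
    by_contra h
    push_neg at h
    have hz : m {x | f' x < 0} = 0 := le_antisymm h zero_le
    have hle : ∀ᵐ x ∂m, 0 ≤ f' x := by
      rw [ae_iff]
      convert hz using 2 with x
      simp
    have hz2 := (integral_eq_zero_iff_of_nonneg_ae hle hint).mp hint0'
    have : ∫ x, f' x ^ 2 ∂m = 0 := by
      have h2 : (fun x => f' x ^ 2) =ᵐ[m] fun _ => (0:ℝ) := hz2.mono fun x hx => by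
        simp [hx]
      rw [integral_congr_ae h2]; simp
    exact absurd this hsq'.ne'
  -- one of the two has measure ≤ m univ / 2
  have hdisj : Disjoint {x | 0 < f' x} {x | f' x < 0} := by
    rw [Set.disjoint_left]
    intro x hx hx'
    simp only [mem_setOf_eq] at hx hx'
    linarith
  have hkey : m {x | 0 < f' x} ≤ m Set.univ / 2 ∨ m {x | f' x < 0} ≤ m Set.univ / 2 := by
    by_contra hcon
    push_neg at hcon
    have h1 : m Set.univ < m {x | 0 < f' x} + m {x | f' x < 0} := by
      calc m Set.univ = m Set.univ / 2 + m Set.univ / 2 := (ENNReal.add_halves _).symm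
        _ < _ := ENNReal.add_lt_add hcon.1 hcon.2
    have h2 : m {x | 0 < f' x} + m {x | f' x < 0} = m ({x | 0 < f' x} ∪ {x | f' x < 0}) :=
      (measure_union hdisj (measurableSet_lt hf'm measurable_const)).symm
    have h3 : m ({x | 0 < f' x} ∪ {x | f' x < 0}) ≤ m Set.univ := measure_mono (subset_univ _)
    rw [← h2] at h3
    exact absurd (lt_of_lt_of_le h1 h3) (lt_irrefl _)
  rcases hkey with h | h
  · exact ⟨_, {x | 0 < f' x}, measurableSet_lt measurable_const hf'm, hP, h, rfl⟩
  · exact ⟨_, {x | f' x < 0}, measurableSet_lt hf'm measurable_const, hN, h, rfl⟩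


lemma gap_le_two_cheeger
    (hrevsets : ∀ {A B : Set X}, MeasurableSet A → MeasurableSet B →
      ∫⁻ x in A, K x B ∂m = ∫⁻ x in B, K x A ∂m) :
    spectralGap K m ≤ 2 * cheegerConst K m := by
  by_cases hne : (cheegerSet K m).Nonempty
  · have hlow : spectralGap K m / 2 ≤ sInf (cheegerSet K m) := by
      refine le_csInf hne ?_
      rintro q ⟨A, hA, hpos, hhalf, rfl⟩
      obtain ⟨f, hmem, hint0, hsqpos, hEeq, hge⟩ :=
        exists_test_function K m hrevsets hA hpos hhalf
      have hqmem : dirichletEnergy2 K m f / ∫ x, f x ^ 2 ∂m ∈ gapSet K m :=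
        ⟨f, hmem, hint0, hsqpos, rfl⟩
      have h1 : spectralGap K m ≤ dirichletEnergy2 K m f / ∫ x, f x ^ 2 ∂m := by
        rw [spectralGap_eq]
        exact csInf_le (gapSet_bddBelow K m) hqmem
      have hAfin : m A ≠ ⊤ := (measure_lt_top m A).ne
      have hapos : 0 < (m A).toReal := ENNReal.toReal_pos hpos.ne' hAfin
      have hbd0 : 0 ≤ boundarySize K m A := boundarySize_nonneg K m A
      have h2 : dirichletEnergy2 K m f / ∫ x, f x ^ 2 ∂m
          ≤ 2 * (boundarySize K m A / (m A).toReal) := by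
        rw [hEeq]
        have hhpos : 0 < (m A).toReal / 2 := by positivity
        calc boundarySize K m A / ∫ x, f x ^ 2 ∂m
            ≤ boundarySize K m A / ((m A).toReal / 2) := by gcongr
          _ = 2 * (boundarySize K m A / (m A).toReal) := by
              field_simp
      linarith
    rw [cheegerConst_eq]
    linarith
  · have hempty : cheegerSet K m = ∅ := Set.not_nonempty_iff_eq_empty.mp hne
    have hκ : cheegerConst K m = 0 := by
      rw [cheegerConst_eq, hempty, Real.sInf_empty]
    have hgapempty : gapSet K m = ∅ := by
      by_contra hc
      exact hne (cheegerSet_nonempty_of_gapSet K m (Set.nonempty_iff_ne_empty.mpr hc))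
    have hgap : spectralGap K m = 0 := by
      rw [spectralGap_eq, hgapempty, Real.sInf_empty]
    rw [hgap, hκ]
    norm_num

lemma cheeger_sq_le_gap
    (hrevsets : ∀ {A B : Set X}, MeasurableSet A → MeasurableSet B →
      ∫⁻ x in A, K x B ∂m = ∫⁻ x in B, K x A ∂m)
    (hsymm : (m.compProd K).map Prod.swap = m.compProd K) :
    cheegerConst K m ^ 2 / 2 ≤ spectralGap K m := by
  by_cases hne : (gapSet K m).Nonempty
  · rw [spectralGap_eq]
    refine le_csInf hne ?_
    rintro q ⟨f, hf, h0, hsq, rfl⟩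
    have hmain := main_est K m hsymm f hf h0 hsq
    rw [div_le_div_iff₀ (by norm_num : (0:ℝ) < 2) hsq]
    linarith
  · have hgapempty : gapSet K m = ∅ := Set.not_nonempty_iff_eq_empty.mp hne
    have hgap : spectralGap K m = 0 := by
      rw [spectralGap_eq, hgapempty, Real.sInf_empty]
    have hcheegempty : cheegerSet K m = ∅ := by
      rw [Set.eq_empty_iff_forall_notMem]
      rintro q ⟨A, hA, hpos, hhalf, rfl⟩
      obtain ⟨f, hmem, hint0, hsqpos, _, _⟩ :=
        exists_test_function K m hrevsets hA hpos hhalf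
      have : dirichletEnergy2 K m f / ∫ x, f x ^ 2 ∂m ∈ gapSet K m :=
        ⟨f, hmem, hint0, hsqpos, rfl⟩
      rw [hgapempty] at this
      exact this
    have hκ : cheegerConst K m = 0 := by
      rw [cheegerConst_eq, hcheegempty, Real.sInf_empty]
    rw [hgap, hκ]
    norm_num

end CheegerProof

/-- **Theorem A.** Let `Π` be a reversible Markov kernel on `X` with finite
reversing measure `m`, `κ` its Cheeger constant and `1 − λ₂` the infimum of the Rayleigh
quotients of the associated Laplacian on zero-average functions. Then
`κ²/2 ≤ 1 − λ₂ ≤ 2κ`. -/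
theorem cheeger_inequalities {X : Type*} [MeasurableSpace X]
    (K : Kernel X X) [IsMarkovKernel K] (m : Measure X) [IsFiniteMeasure m]
    (hrev : ∀ f g : X → ℝ, Measurable f → Measurable g →
      (∃ C, ∀ x, |f x| ≤ C) → (∃ C, ∀ x, |g x| ≤ C) →
      ∫ x, f x * (∫ y, g y ∂(K x)) ∂m = ∫ x, (∫ y, f y ∂(K x)) * g x ∂m) :
    cheegerConst K m ^ 2 / 2 ≤ spectralGap K m ∧ spectralGap K m ≤ 2 * cheegerConst K m := by
  have hrevsets : ∀ {A B : Set X}, MeasurableSet A → MeasurableSet B →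
      ∫⁻ x in A, K x B ∂m = ∫⁻ x in B, K x A ∂m := fun hA hB => rev_sets K m hrev hA hB
  have hsymm : (m.compProd K).map Prod.swap = m.compProd K := compProd_symm K m hrev
  exact ⟨cheeger_sq_le_gap K m hrevsets hsymm, gap_le_two_cheeger K m hrevsets⟩
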